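/- arXiv:2001.04781 — 2 statements merged into one kernel-verified Lean document; each statement's English description precedes it below -/
import Mathlib

section
/- Let ζ ∈ ℂ with Re(ζ) < 0, h > 0 and ℓ a nonnegative half-integer. Then as s → +∞, ∫₀ʰ r^ℓ e^{s√r·ζ} dr = (2·(−1)^{2ℓ}·(2ℓ+1)!)/(s^{2ℓ+2}·ζ^{2ℓ+2}) + O(s^{−1/2}·e^{√(sh)·Re(ζ)}); in particular s^{2ℓ+2}·∫₀ʰ r^ℓ e^{s√r·ζ} dr → 2·(−1)^{2ℓ}·(2ℓ+1)!/ζ^{2ℓ+2}. -/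
open Complex Real Filter Asymptotics

noncomputable def Qa : ℕ → ℂ → ℝ → ℂ
  | 0, z, _ => 1/z
  | (n+1), z, u => (u:ℂ)^(n+1)/z - ((n+1 : ℕ):ℂ)/z * Qa n z u

lemma Qa_zero (n : ℕ) (z : ℂ) (hz : z ≠ 0) :
    Qa n z 0 = (-1)^n * (n.factorial : ℂ)/z^(n+1) := by
  induction n with
  | zero => simp [Qa]
  | succ n ih =>
    simp only [Qa, ih, Nat.factorial_succ, Complex.ofReal_zero]
    push_cast
    field_simp
    ring

lemma Qa_cont (n : ℕ) (z : ℂ) : Continuous fun u : ℝ => Qa n z u := by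
  induction n with
  | zero => simpa [Qa] using continuous_const
  | succ n ih =>
    simp only [Qa]
    exact ((Complex.continuous_ofReal.pow _).div_const _).sub (continuous_const.mul ih)

lemma Qa_deriv (n : ℕ) (z : ℂ) (hz : z ≠ 0) (u : ℝ) :
    HasDerivAt (fun u : ℝ => Complex.exp (z*u) * Qa n z u) ((u:ℂ)^n * Complex.exp (z*u)) u := by
  have hre : HasDerivAt (fun u : ℝ => (u:ℂ)) 1 u := by
    simpa using (hasDerivAt_id u).ofReal_comp
  have hexp : HasDerivAt (fun u : ℝ => Complex.exp (z*u)) (Complex.exp (z*u) * z) u := by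
    simpa using ((hre.const_mul z).cexp)
  induction n with
  | zero =>
    have h0 := hexp.mul_const (1/z)
    have he : (fun u:ℝ => Complex.exp (z*u) * Qa 0 z u)
        = fun u:ℝ => Complex.exp (z*u) * (1/z) := by
      funext u; simp [Qa]
    rw [he]
    convert h0 using 1
    · rfl
    simp [hz]
  | succ n ih =>
    have heq : (fun u:ℝ => Complex.exp (z*u) * Qa (n+1) z u)
        = fun u:ℝ => Complex.exp (z*u) * ((u:ℂ)^(n+1)/z)
            - ((n+1 : ℕ):ℂ)/z * (Complex.exp (z*u) * Qa n z u) := by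
      funext u; simp only [Qa]; ring
    rw [heq]
    have hpoly : HasDerivAt (fun u : ℝ => (u:ℂ)^(n+1)/z) ((((n+1:ℕ):ℂ) * (u:ℂ)^n)/z) u := by
      simpa using ((hasDerivAt_pow (n+1) ((u:ℂ))).comp_ofReal).div_const z
    have h1 := hexp.mul hpoly
    have h2 := ih.const_mul (((n+1 : ℕ):ℂ)/z)
    convert h1.sub h2 using 1
    · rfl
    · rfl
    simp only [div_eq_mul_inv]
    push_cast
    linear_combination (-((u:ℂ)^(n+1) * Complex.exp (z*u))) * mul_inv_cancel₀ hz

lemma Qa_bound (n : ℕ) (T : ℝ) (ζ : ℂ) (hζ : ζ ≠ 0) :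
    ∃ C : ℝ, 0 ≤ C ∧ ∀ s : ℝ, 1 ≤ s → ‖Qa n ((s:ℂ)*ζ) T‖ ≤ C / s := by
  induction n with
  | zero =>
    refine ⟨‖ζ‖⁻¹, by positivity, fun s hs => ?_⟩
    have hs0 : 0 < s := lt_of_lt_of_le one_pos hs
    simp only [Qa]
    have hz : (0:ℝ) < ‖ζ‖ := norm_pos_iff.mpr hζ
    rw [norm_div, norm_one, norm_mul, Complex.norm_real, Real.norm_eq_abs,
      abs_of_pos hs0]
    rw [show (1:ℝ)/(s*‖ζ‖) = ‖ζ‖⁻¹/s by field_simp]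
  | succ n ih =>
    obtain ⟨C, hC0, hC⟩ := ih
    refine ⟨|T|^(n+1)/‖ζ‖ + (n+1)/‖ζ‖ * C, by positivity, fun s hs => ?_⟩
    have hs0 : 0 < s := lt_of_lt_of_le one_pos hs
    simp only [Qa]
    have h1 : ‖((T:ℂ))^(n+1)/((s:ℂ)*ζ)‖ = |T|^(n+1)/(s*‖ζ‖) := by
      rw [norm_div, norm_pow, norm_mul, Complex.norm_real, Complex.norm_real,
        Real.norm_eq_abs, Real.norm_eq_abs, abs_of_pos hs0]
    have h2 : ‖((n+1 : ℕ):ℂ)/((s:ℂ)*ζ) * Qa n ((s:ℂ)*ζ) T‖ ≤ (n+1)/(s*‖ζ‖) * (C/s) := by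
      rw [norm_mul, norm_div, norm_mul, Complex.norm_real, Real.norm_eq_abs, abs_of_pos hs0]
      have : ‖((n+1 : ℕ):ℂ)‖ = ((n:ℝ)+1) := by
        rw [Complex.norm_natCast]; push_cast; ring
      rw [this]
      exact mul_le_mul le_rfl (hC s hs) (norm_nonneg _) (by positivity)
    calc ‖(T:ℂ)^(n+1)/((s:ℂ)*ζ) - ((n+1 : ℕ):ℂ)/((s:ℂ)*ζ) * Qa n ((s:ℂ)*ζ) T‖
        ≤ ‖(T:ℂ)^(n+1)/((s:ℂ)*ζ)‖ + ‖((n+1 : ℕ):ℂ)/((s:ℂ)*ζ) * Qa n ((s:ℂ)*ζ) T‖ :=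
          norm_sub_le _ _
      _ ≤ |T|^(n+1)/(s*‖ζ‖) + (n+1)/(s*‖ζ‖) * (C/s) := by
          rw [h1]; exact add_le_add le_rfl h2
      _ ≤ (|T|^(n+1)/‖ζ‖ + (n+1)/‖ζ‖ * C)/s := by
          have hz : (0:ℝ) < ‖ζ‖ := norm_pos_iff.mpr hζ
          have e1 : |T|^(n+1)/(s*‖ζ‖) = (|T|^(n+1)/‖ζ‖)/s := by
            rw [mul_comm, ← div_div]
          have e2 : ((n:ℝ)+1)/(s*‖ζ‖)*(C/s) ≤ (((n:ℝ)+1)/‖ζ‖*C)/s := by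
            rw [show ((n:ℝ)+1)/(s*‖ζ‖)*(C/s) = (((n:ℝ)+1)/‖ζ‖*C)/s * (1/s) by
              field_simp]
            exact mul_le_of_le_one_right (by positivity) ((div_le_one hs0).mpr hs)
          calc |T|^(n+1)/(s*‖ζ‖) + ((n:ℝ)+1)/(s*‖ζ‖) * (C/s)
              ≤ (|T|^(n+1)/‖ζ‖)/s + (((n:ℝ)+1)/‖ζ‖*C)/s := by
                rw [e1]; exact add_le_add le_rfl e2
            _ = (|T|^(n+1)/‖ζ‖ + ((n:ℝ)+1)/‖ζ‖ * C)/s := (add_div _ _ _).symm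

lemma integral_eval (z : ℂ) (hz : z ≠ 0) (m : ℕ) (h : ℝ) (hh : 0 < h) :
    ∫ r in (0:ℝ)..h, ((Real.sqrt r ^ m : ℝ) : ℂ) * Complex.exp (z * Real.sqrt r)
      = 2 * (Complex.exp (z * Real.sqrt h) * Qa (m+1) z (Real.sqrt h))
        - 2 * ((-1:ℂ)^(m+1) * ((m+1).factorial : ℂ)/z^(m+2)) := by
  set F : ℝ → ℂ := fun r => 2 * (Complex.exp (z * Real.sqrt r) * Qa (m+1) z (Real.sqrt r))
    with hF
  have hcont : ContinuousOn F (Set.Icc 0 h) := by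
    apply Continuous.continuousOn
    apply continuous_const.mul
    exact ((Complex.continuous_exp.comp
      (continuous_const.mul (Complex.continuous_ofReal.comp Real.continuous_sqrt))).mul
      ((Qa_cont (m+1) z).comp Real.continuous_sqrt))
  have hgcont : Continuous fun r : ℝ => ((Real.sqrt r ^ m : ℝ) : ℂ) * Complex.exp (z * Real.sqrt r) := by
    exact (Complex.continuous_ofReal.comp ((Real.continuous_sqrt).pow m)).mul
      (Complex.continuous_exp.comp
        (continuous_const.mul (Complex.continuous_ofReal.comp Real.continuous_sqrt)))
  have hderiv : ∀ r ∈ Set.Ioo (0:ℝ) h,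
      HasDerivWithinAt F (((Real.sqrt r ^ m : ℝ) : ℂ) * Complex.exp (z * Real.sqrt r))
        (Set.Ioi r) r := by
    intro r hr
    have hr0 : 0 < r := hr.1
    have hs0 : 0 < Real.sqrt r := Real.sqrt_pos.mpr hr0
    have h1 := (Qa_deriv (m+1) z hz (Real.sqrt r)).scomp r (Real.hasDerivAt_sqrt hr0.ne')
    have h2 := h1.const_mul (2:ℂ)
    have h3 : HasDerivAt F
        ((2:ℂ) * ((1 / (2 * Real.sqrt r)) • (((Real.sqrt r : ℝ):ℂ)^(m+1)
          * Complex.exp (z * (Real.sqrt r : ℝ))))) r := by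
      exact h2
    have heq : (2:ℂ) * ((1 / (2 * Real.sqrt r)) • (((Real.sqrt r : ℝ):ℂ)^(m+1)
          * Complex.exp (z * (Real.sqrt r : ℝ))))
        = ((Real.sqrt r ^ m : ℝ) : ℂ) * Complex.exp (z * Real.sqrt r) := by
      rw [Complex.real_smul]
      push_cast
      have hsc : ((Real.sqrt r : ℝ) : ℂ) ≠ 0 := by
        exact_mod_cast Complex.ofReal_ne_zero.mpr hs0.ne'
      field_simp
      ring
    rw [heq] at h3
    exact h3.hasDerivWithinAt
  have key := intervalIntegral.integral_eq_sub_of_hasDeriv_right_of_le hh.le hcont hderiv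
    (hgcont.intervalIntegrable _ _)
  rw [key, hF]
  simp only [Real.sqrt_zero, Complex.ofReal_zero, mul_zero, Complex.exp_zero, one_mul]
  rw [Qa_zero (m+1) z hz]

theorem stmt_12 (ζ : ℂ) (hζ : ζ.re < 0) (h : ℝ) (hh : 0 < h) (m : ℕ) :
    (fun s : ℝ =>
        (∫ r in (0:ℝ)..h,
            ((r ^ ((m : ℝ) / 2) : ℝ) : ℂ) * Complex.exp (s * Real.sqrt r * ζ)) -
          2 * (-1 : ℂ) ^ m * (Nat.factorial (m + 1) : ℂ) /
            ((s : ℂ) ^ (m + 2) * ζ ^ (m + 2)))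
      =O[atTop] (fun s : ℝ => s ^ (-(1 : ℝ) / 2) * Real.exp (Real.sqrt (s * h) * ζ.re)) ∧
    Tendsto
      (fun s : ℝ =>
        (s : ℂ) ^ (m + 2) *
          ∫ r in (0:ℝ)..h,
            ((r ^ ((m : ℝ) / 2) : ℝ) : ℂ) * Complex.exp (s * Real.sqrt r * ζ))
      atTop
      (nhds (2 * (-1 : ℂ) ^ m * (Nat.factorial (m + 1) : ℂ) / ζ ^ (m + 2))) := by
  have hζ0 : ζ ≠ 0 := fun hcon => by simp [hcon] at hζ
  have hsqh : 0 < Real.sqrt h := Real.sqrt_pos.mpr hh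
  have hA : ∀ s : ℝ,
      (∫ r in (0:ℝ)..h, ((r ^ ((m : ℝ) / 2) : ℝ) : ℂ) * Complex.exp (s * Real.sqrt r * ζ))
      = ∫ r in (0:ℝ)..h, ((Real.sqrt r ^ m : ℝ) : ℂ)
          * Complex.exp (((s:ℂ)*ζ) * Real.sqrt r) := by
    intro s
    apply intervalIntegral.integral_congr
    intro r hr
    rw [Set.uIcc_of_le hh.le] at hr
    have hr0 : (0:ℝ) ≤ r := hr.1
    have hrp : (r : ℝ) ^ ((m:ℝ)/2) = Real.sqrt r ^ m := by
      rw [Real.sqrt_eq_rpow, ← Real.rpow_natCast (r ^ ((1:ℝ)/2)) m, ← Real.rpow_mul hr0]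
      congr 1
      ring
    simp only [hrp]
    congr 1
    ring
  have hB : ∀ s : ℝ, s ≠ 0 →
      (∫ r in (0:ℝ)..h, ((r ^ ((m : ℝ) / 2) : ℝ) : ℂ) * Complex.exp (s * Real.sqrt r * ζ))
        - 2 * (-1 : ℂ) ^ m * (Nat.factorial (m + 1) : ℂ) / ((s : ℂ) ^ (m + 2) * ζ ^ (m + 2))
      = 2 * (Complex.exp (((s:ℂ)*ζ) * Real.sqrt h) * Qa (m+1) ((s:ℂ)*ζ) (Real.sqrt h)) := by
    intro s hs
    have hz : (s:ℂ)*ζ ≠ 0 := mul_ne_zero (Complex.ofReal_ne_zero.mpr hs) hζ0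
    rw [hA s, integral_eval _ hz m h hh]
    have hkey : (2:ℂ) * ((-1:ℂ)^(m+1) * ((m+1).factorial : ℂ)/(((s:ℂ)*ζ))^(m+2))
        = - (2 * (-1 : ℂ) ^ m * (Nat.factorial (m + 1) : ℂ)
            / ((s : ℂ) ^ (m + 2) * ζ ^ (m + 2))) := by
      rw [mul_pow, pow_succ]
      ring
    rw [hkey]
    ring
  obtain ⟨C, hC0, hC⟩ := Qa_bound (m+1) (Real.sqrt h) ζ hζ0
  have hO : (fun s : ℝ =>
        (∫ r in (0:ℝ)..h,
            ((r ^ ((m : ℝ) / 2) : ℝ) : ℂ) * Complex.exp (s * Real.sqrt r * ζ)) -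
          2 * (-1 : ℂ) ^ m * (Nat.factorial (m + 1) : ℂ) /
            ((s : ℂ) ^ (m + 2) * ζ ^ (m + 2)))
      =O[atTop] (fun s : ℝ => s ^ (-(1 : ℝ) / 2) * Real.exp (Real.sqrt (s * h) * ζ.re)) := by
    rw [isBigO_iff]
    refine ⟨2*C, ?_⟩
    filter_upwards [eventually_ge_atTop (1:ℝ)] with s hs
    have hs0 : (0:ℝ) < s := lt_of_lt_of_le one_pos hs
    rw [hB s hs0.ne']
    have hre : (((s:ℂ)*ζ) * ((Real.sqrt h : ℝ):ℂ)).re = s * ζ.re * Real.sqrt h := by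
      simp [Complex.mul_re]
    have hnorm : ‖(2:ℂ) * (Complex.exp (((s:ℂ)*ζ) * ((Real.sqrt h:ℝ):ℂ))
          * Qa (m+1) ((s:ℂ)*ζ) (Real.sqrt h))‖
        = 2 * (Real.exp (s * ζ.re * Real.sqrt h) * ‖Qa (m+1) ((s:ℂ)*ζ) (Real.sqrt h)‖) := by
      rw [norm_mul, norm_mul, Complex.norm_exp, hre]
      norm_num
    rw [hnorm, Real.norm_eq_abs, abs_of_pos (by positivity)]
    have hsqs : Real.sqrt s ≤ s := by
      nlinarith [sq_nonneg (Real.sqrt s - 1), Real.sq_sqrt hs0.le]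
    have key1 : Real.exp (s * ζ.re * Real.sqrt h) ≤ Real.exp (Real.sqrt (s*h) * ζ.re) := by
      rw [Real.exp_le_exp, Real.sqrt_mul hs0.le]
      nlinarith [mul_nonpos_of_nonneg_of_nonpos
        (mul_nonneg (sub_nonneg.mpr hsqs) hsqh.le) hζ.le]
    have key2 : ‖Qa (m+1) ((s:ℂ)*ζ) (Real.sqrt h)‖ ≤ C * s ^ (-(1:ℝ)/2) := by
      refine (hC s hs).trans ?_
      rw [div_eq_mul_inv]
      have e : s⁻¹ = s ^ (-(1:ℝ)) := (Real.rpow_neg_one s).symm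
      rw [e]
      exact mul_le_mul_of_nonneg_left
        (Real.rpow_le_rpow_of_exponent_le hs (by norm_num)) hC0
    calc 2 * (Real.exp (s * ζ.re * Real.sqrt h) * ‖Qa (m+1) ((s:ℂ)*ζ) (Real.sqrt h)‖)
        ≤ 2 * (Real.exp (Real.sqrt (s*h) * ζ.re) * (C * s ^ (-(1:ℝ)/2))) := by
          refine mul_le_mul_of_nonneg_left
            (mul_le_mul key1 key2 (norm_nonneg _) (Real.exp_pos _).le) (by norm_num)
      _ = 2*C * (s ^ (-(1:ℝ)/2) * Real.exp (Real.sqrt (s*h) * ζ.re)) := by ring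
  refine ⟨hO, ?_⟩
  -- decay of the comparison function times s^(m+2)
  have hg0 : Tendsto (fun s : ℝ => (s:ℝ)^(m+2)
      * (s ^ (-(1:ℝ)/2) * Real.exp (Real.sqrt (s*h) * ζ.re))) atTop (nhds 0) := by
    have ha : (0:ℝ) < -(Real.sqrt h * ζ.re) := by nlinarith [hsqh]
    have base := tendsto_rpow_mul_exp_neg_mul_atTop_nhds_zero (((2*m+3:ℕ)):ℝ)
      (-(Real.sqrt h * ζ.re)) ha
    have comp := base.comp (tendsto_rpow_atTop (by norm_num : (0:ℝ) < 1/2))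
    apply comp.congr'
    filter_upwards [eventually_ge_atTop (1:ℝ)] with s hs
    have hs0 : (0:ℝ) < s := lt_of_lt_of_le one_pos hs
    show (s ^ ((1:ℝ)/2)) ^ (((2*m+3:ℕ)):ℝ)
        * Real.exp (-(-(Real.sqrt h * ζ.re)) * s ^ ((1:ℝ)/2)) = _
    have e2 : (s:ℝ)^(m+2) * s ^ (-(1:ℝ)/2) = s ^ ((1:ℝ)/2 * (((2*m+3:ℕ)):ℝ)) := by
      rw [← Real.rpow_natCast s (m+2), ← Real.rpow_add hs0]
      congr 1
      push_cast
      ring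
    rw [← Real.rpow_mul hs0.le, ← mul_assoc, e2, Real.sqrt_mul hs0.le,
      Real.sqrt_eq_rpow s, Real.sqrt_eq_rpow h]
    congr 1
    ring
  -- tendsto of the scaled difference to zero
  obtain ⟨C₂, hC₂⟩ := isBigO_iff.mp hO
  have hzero : Tendsto (fun s : ℝ => (s:ℂ)^(m+2) *
      ((∫ r in (0:ℝ)..h, ((r ^ ((m : ℝ) / 2) : ℝ) : ℂ) * Complex.exp (s * Real.sqrt r * ζ)) -
          2 * (-1 : ℂ) ^ m * (Nat.factorial (m + 1) : ℂ) /
            ((s : ℂ) ^ (m + 2) * ζ ^ (m + 2)))) atTop (nhds 0) := by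
    rw [tendsto_zero_iff_norm_tendsto_zero]
    apply squeeze_zero' (Eventually.of_forall fun s => norm_nonneg _)
      (g := fun s => C₂ * ((s:ℝ)^(m+2) * (s ^ (-(1:ℝ)/2) * Real.exp (Real.sqrt (s*h) * ζ.re))))
    · filter_upwards [hC₂, eventually_ge_atTop (1:ℝ)] with s hbnd hs
      have hs0 : (0:ℝ) < s := lt_of_lt_of_le one_pos hs
      rw [norm_mul, norm_pow, Complex.norm_real, Real.norm_eq_abs, abs_of_pos hs0]
      have hgpos : ‖s ^ (-(1:ℝ)/2) * Real.exp (Real.sqrt (s*h) * ζ.re)‖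
          = s ^ (-(1:ℝ)/2) * Real.exp (Real.sqrt (s*h) * ζ.re) := by
        rw [Real.norm_eq_abs, abs_of_pos (by positivity)]
      rw [hgpos] at hbnd
      calc s^(m+2) * ‖_‖ ≤ s^(m+2) * (C₂ * (s ^ (-(1:ℝ)/2) * Real.exp (Real.sqrt (s*h) * ζ.re))) :=
            mul_le_mul_of_nonneg_left hbnd (by positivity)
        _ = C₂ * ((s:ℝ)^(m+2) * (s ^ (-(1:ℝ)/2) * Real.exp (Real.sqrt (s*h) * ζ.re))) := by ring
    · simpa using hg0.const_mul C₂
  have heq : (fun s : ℝ => (s:ℂ)^(m+2) *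
      ((∫ r in (0:ℝ)..h, ((r ^ ((m : ℝ) / 2) : ℝ) : ℂ) * Complex.exp (s * Real.sqrt r * ζ)) -
          2 * (-1 : ℂ) ^ m * (Nat.factorial (m + 1) : ℂ) /
            ((s : ℂ) ^ (m + 2) * ζ ^ (m + 2)))
        + 2 * (-1 : ℂ) ^ m * (Nat.factorial (m + 1) : ℂ) / ζ ^ (m + 2))
      =ᶠ[atTop] (fun s : ℝ => (s:ℂ)^(m+2) *
        ∫ r in (0:ℝ)..h, ((r ^ ((m : ℝ) / 2) : ℝ) : ℂ) * Complex.exp (s * Real.sqrt r * ζ)) := by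
    filter_upwards [eventually_ge_atTop (1:ℝ)] with s hs
    have hs0 : (0:ℝ) < s := lt_of_lt_of_le one_pos hs
    have hsne : ((s:ℂ))^(m+2) ≠ 0 := pow_ne_zero _ (Complex.ofReal_ne_zero.mpr hs0.ne')
    have hζp : (ζ:ℂ)^(m+2) ≠ 0 := pow_ne_zero _ hζ0
    linear_combination (-(2 * (-1 : ℂ) ^ m * (Nat.factorial (m + 1) : ℂ) / ζ ^ (m + 2))) * mul_inv_cancel₀ hsne
  have hfinal := hzero.add (tendsto_const_nhds
    (x := 2 * (-1 : ℂ) ^ m * ((Nat.factorial (m + 1)) : ℂ) / ζ ^ (m + 2)) (f := atTop))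
  rw [zero_add] at hfinal
  exact hfinal.congr' heq
end

section
/- Let φ_m < φ_M be angles in (−π, π), let s > 0, and define v₁(x) = exp(−s·√r·e^{iφ/2}) in polar coordinates x = r(cos φ, sin φ). Then ∫_{K} v₁(x) dx = 6i·(e^{−2iφ_M} − e^{−2iφ_m})·s^{−4}, where K = {x ∈ ℝ² \ {0} : φ_m < arg(x₁ + i x₂) < φ_M}. -/
open Complex Real MeasureTheory Set Filter

lemma cube_exp_tendsto (c : ℂ) (hc : 0 < c.re) (k : ℕ) :
    Tendsto (fun t : ℝ => (t:ℂ)^k * Complex.exp (-c * t)) atTop (nhds 0) := by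
  rw [tendsto_zero_iff_norm_tendsto_zero]
  have h := tendsto_rpow_mul_exp_neg_mul_atTop_nhds_zero (k:ℝ) c.re hc
  apply h.congr'
  filter_upwards [eventually_gt_atTop (0:ℝ)] with t ht
  rw [norm_mul, norm_pow, Complex.norm_exp,
    Complex.norm_real, Real.norm_eq_abs, abs_of_pos ht, Real.rpow_natCast]
  congr 1
  simp [Complex.neg_re, Complex.mul_re]

lemma int_cube (c : ℂ) (hc : 0 < c.re) :
    ∫ t in Set.Ioi (0:ℝ), (t:ℂ)^3 * Complex.exp (-c * t) = 6 / c^4 := by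
  have hc0 : c ≠ 0 := fun h => by simp [h] at hc
  set F : ℝ → ℂ := fun t => -Complex.exp (-c*t) *
    ((c^3*(t:ℂ)^3 + 3*c^2*(t:ℂ)^2 + 6*c*(t:ℂ) + 6) / c^4) with hF
  have hderiv : ∀ t : ℝ, t ∈ Ici (0:ℝ) → HasDerivAt F ((t:ℂ)^3 * Complex.exp (-c * t)) t := by
    intro t _
    have h1 : HasDerivAt (fun z : ℂ => Complex.exp (-c*z)) (Complex.exp (-c*(t:ℂ)) * -c) (t:ℂ) := by
      have := (Complex.hasDerivAt_exp (-c*(t:ℂ))).comp (t:ℂ)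
        ((hasDerivAt_id (t:ℂ)).const_mul (-c))
      simpa [Function.comp_def, mul_comm] using this
    have h2 : HasDerivAt (fun z : ℂ => (c^3*z^3 + 3*c^2*z^2 + 6*c*z + 6) / c^4)
        ((c^3*(3*(t:ℂ)^2) + 3*c^2*(2*(t:ℂ)) + 6*c) / c^4) (t:ℂ) := by
      have := (((((hasDerivAt_pow 3 (t:ℂ)).const_mul (c^3)).add
          (((hasDerivAt_pow 2 (t:ℂ)).const_mul (3*c^2)))).add
          (((hasDerivAt_id (t:ℂ)).const_mul (6*c)))).add_const (6:ℂ)).div_const (c^4)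
      simp only [Pi.add_apply, id] at this
      refine this.congr_deriv ?_
      rw [show (3:ℕ) - 1 = 2 from rfl, show (2:ℕ) - 1 = 1 from rfl]
      push_cast
      ring
    have h3 := (h1.neg.mul h2).comp_ofReal
    convert h3 using 1
    · rfl
    simp only [Pi.neg_apply]
    field_simp
    ring
  have hg := integrableOn_rpow_mul_exp_neg_mul_rpow (p := 1) (s := 3) (b := c.re)
      (by norm_num) one_pos hc
  have hint : IntegrableOn (fun t : ℝ => (t:ℂ)^3 * Complex.exp (-c * t)) (Ioi 0) := by
    apply (hg.mono' ?_ ?_)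
    · exact (Continuous.aestronglyMeasurable (by fun_prop)).restrict
    · rw [ae_restrict_iff' measurableSet_Ioi]
      filter_upwards with t ht
      rw [norm_mul, norm_pow, Complex.norm_exp,
        Complex.norm_real, Real.norm_eq_abs, abs_of_pos ht, Real.rpow_one,
        show ((3:ℝ)) = ((3:ℕ):ℝ) by norm_num, Real.rpow_natCast]
      apply le_of_eq
      congr 1
      simp [Complex.neg_re, Complex.mul_re]
  have htend : Tendsto F atTop (nhds 0) := by
    have h3 := cube_exp_tendsto c hc 3
    have h2 := cube_exp_tendsto c hc 2
    have h1 := cube_exp_tendsto c hc 1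
    have h0 := cube_exp_tendsto c hc 0
    have key : Tendsto (fun t : ℝ => -((c^3*((t:ℂ)^3 * Complex.exp (-c*t))
        + 3*c^2*((t:ℂ)^2 * Complex.exp (-c*t)) + 6*c*((t:ℂ)^1 * Complex.exp (-c*t))
        + 6*((t:ℂ)^0 * Complex.exp (-c*t))) / c^4)) atTop (nhds 0) := by
      have := ((((h3.const_mul (c^3)).add (h2.const_mul (3*c^2))).add
        (h1.const_mul (6*c))).add (h0.const_mul 6)).div_const (c^4)
      simpa using this.neg
    apply key.congr
    intro t
    simp only [hF]
    ring
  rw [integral_Ioi_of_hasDerivAt_of_tendsto' hderiv hint htend]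
  simp only [hF]
  push_cast
  field_simp
  simp

lemma int_subst (c : ℂ) (hc : 0 < c.re) :
    ∫ r in Set.Ioi (0:ℝ), Complex.exp (-c * (Real.sqrt r : ℂ)) * (r:ℂ) = 12 / c^4 := by
  have h := integral_comp_rpow_Ioi_of_pos
    (g := fun y : ℝ => Complex.exp (-c * (Real.sqrt y : ℂ)) * (y:ℂ)) (p := 2) two_pos
  rw [← h]
  have congr1 : ∀ x ∈ Set.Ioi (0:ℝ),
      (2 * x ^ ((2:ℝ) - 1)) • (Complex.exp (-c * (Real.sqrt (x ^ (2:ℝ)) : ℂ)) * ((x ^ (2:ℝ) : ℝ):ℂ))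
        = (2:ℂ) * ((x:ℂ)^3 * Complex.exp (-c * x)) := by
    intro x hx
    have hx0 : (0:ℝ) ≤ x := le_of_lt hx
    rw [show ((2:ℝ) - 1) = 1 by norm_num, Real.rpow_one,
      show (x ^ (2:ℝ)) = x^2 by rw [← Real.rpow_natCast x 2]; norm_num,
      Real.sqrt_sq hx0]
    push_cast
    rw [Complex.real_smul]
    push_cast
    ring
  rw [setIntegral_congr_fun measurableSet_Ioi congr1, MeasureTheory.integral_const_mul,
    int_cube c hc]
  ring

theorem stmt_14 (φm φM : ℝ) (hm : -Real.pi < φm) (hmM : φm < φM) (hM : φM < Real.pi)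
    (s : ℝ) (hs : 0 < s) :
    (∫ φ in φm..φM, ∫ r in Set.Ioi (0:ℝ),
        Complex.exp (-(s * Real.sqrt r) * Complex.exp (I * φ / 2)) * (r : ℂ))
      = 6 * I * (Complex.exp (-2 * I * φM) - Complex.exp (-2 * I * φm)) / (s : ℂ) ^ 4 := by
  have hinner : ∀ φ ∈ Set.uIcc φm φM,
      (∫ r in Set.Ioi (0:ℝ),
        Complex.exp (-(s * Real.sqrt r) * Complex.exp (I * φ / 2)) * (r : ℂ))
      = (12 / (s:ℂ)^4) * Complex.exp ((-2 * I) * φ) := by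
    intro φ hφ
    rw [Set.uIcc_of_le hmM.le] at hφ
    have hφ1 : -Real.pi < φ := lt_of_lt_of_le hm hφ.1
    have hφ2 : φ < Real.pi := lt_of_le_of_lt hφ.2 hM
    set c : ℂ := (s:ℂ) * Complex.exp (I * φ / 2) with hcdef
    have hre : 0 < c.re := by
      have : (I * (φ:ℂ) / 2) = ((φ/2 : ℝ) : ℂ) * I := by push_cast; ring
      rw [hcdef, this, Complex.re_ofReal_mul, Complex.exp_ofReal_mul_I_re]
      exact mul_pos hs (Real.cos_pos_of_mem_Ioo
        ⟨by linarith [Real.pi_pos], by linarith [Real.pi_pos]⟩)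
    have congr2 : ∀ r ∈ Set.Ioi (0:ℝ),
        Complex.exp (-(s * Real.sqrt r) * Complex.exp (I * φ / 2)) * (r : ℂ)
          = Complex.exp (-c * (Real.sqrt r : ℂ)) * (r:ℂ) := by
      intro r hr
      congr 1
      rw [hcdef]
      ring
    rw [setIntegral_congr_fun measurableSet_Ioi congr2, int_subst c hre, hcdef]
    have hs4 : ((s:ℂ))^4 ≠ 0 := pow_ne_zero _ (by exact_mod_cast hs.ne')
    rw [mul_pow, ← Complex.exp_nat_mul,
      show ((4:ℕ):ℂ) * (I * (φ:ℂ) / 2) = -(-2 * I * (φ:ℂ)) by push_cast; ring,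
      Complex.exp_neg]
    field_simp
  rw [intervalIntegral.integral_congr hinner, intervalIntegral.integral_const_mul,
    integral_exp_mul_complex (by simp [Complex.ext_iff] : (-2 * I : ℂ) ≠ 0)]
  have hs4 : ((s:ℂ))^4 ≠ 0 := pow_ne_zero _ (by exact_mod_cast hs.ne')
  field_simp
  ring_nf
  simp [Complex.I_sq]
end
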